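/- (Key step of Proposition 7.2 for bundles over compact hyperbolic surfaces: equal values propagate.) Let Γ be a cocompact Fuchsian group acting on [0,1] by homeomorphisms fixing 0 and 1, and assume that no point x ∈ (0,1) has a finite Γ-orbit. Let f̃ : 𝔻 × [0,1] → ℝ be a Γ-invariant leafwise harmonic function with f̃(z,0) = 0 and f̃(z,1) = 1 for all z ∈ 𝔻. If f̃(z₀,x₀) = f̃(z₀,x₁) for some z₀ ∈ 𝔻 and some 0 ≤ x₀ < x₁ ≤ 1, then f̃(z,x) = f̃(z,x₀) for every z ∈ 𝔻 and every x ∈ [x₀,x₁]. -/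

import Mathlib

open Metric Set Filter

noncomputable section

/-- The open unit disc in `ℂ`. -/
def unitDisc : Set ℂ := Metric.ball 0 1

/-- A function `f : ℂ → ℝ` is harmonic on a set `U ⊆ ℂ` if, locally on `U`, it is
the real part of a holomorphic function (for open `U` this is equivalent to being
`C²` with vanishing Laplacian). -/
def HarmonicOnSet (f : ℂ → ℝ) (U : Set ℂ) : Prop :=
  ∀ z ∈ U, ∃ r > 0, Metric.ball z r ⊆ U ∧
    ∃ g : ℂ → ℂ, DifferentiableOn ℂ g (Metric.ball z r) ∧
      ∀ w ∈ Metric.ball z r, f w = (g w).re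

/-- `ρ` is a cocompact Fuchsian group action of `Γ` on the open unit disc: a faithful,
properly discontinuous, cocompact action by Möbius transformations
`z ↦ (αz+β)/(β̄z+ᾱ)` with `|α|² - |β|² = 1`. -/
structure IsCocompactFuchsian (Γ : Type*) [Group Γ] (ρ : Γ → ℂ → ℂ) : Prop where
  one_act : ∀ z ∈ unitDisc, ρ 1 z = z
  mul_act : ∀ γ₁ γ₂ : Γ, ∀ z ∈ unitDisc, ρ (γ₁ * γ₂) z = ρ γ₁ (ρ γ₂ z)
  maps_disc : ∀ γ : Γ, ∀ z ∈ unitDisc, ρ γ z ∈ unitDisc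
  moebius : ∀ γ : Γ, ∃ α β : ℂ, ‖α‖ ^ 2 - ‖β‖ ^ 2 = 1 ∧
    ∀ z ∈ unitDisc, ρ γ z = (α * z + β) / ((starRingEnd ℂ) β * z + (starRingEnd ℂ) α)
  faithful : ∀ γ : Γ, (∀ z ∈ unitDisc, ρ γ z = z) → γ = 1
  properly_discontinuous : ∀ K : Set ℂ, K ⊆ unitDisc → IsCompact K →
    {γ : Γ | ((ρ γ '' K) ∩ K).Nonempty}.Finite
  cocompact : ∃ K : Set ℂ, K ⊆ unitDisc ∧ IsCompact K ∧ ∀ z ∈ unitDisc, ∃ γ : Γ, ρ γ z ∈ K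

/-- `σ` is an action of the group `Γ` on the topological space `X` by homeomorphisms. -/
structure IsActionByHomeomorphisms (Γ : Type*) [Group Γ] (X : Type*) [TopologicalSpace X]
    (σ : Γ → X → X) : Prop where
  one_act : ∀ x : X, σ 1 x = x
  mul_act : ∀ γ₁ γ₂ : Γ, ∀ x : X, σ (γ₁ * γ₂) x = σ γ₁ (σ γ₂ x)
  continuous_act : ∀ γ : Γ, Continuous (σ γ)

/-- **Key step of Proposition 7.2: equal values propagate.** With `Γ`, `σ`, `f` as in the
transverse monotonicity lemma, if `f(z₀,x₀) = f(z₀,x₁)` for some `z₀ ∈ 𝔻` and `x₀ < x₁`,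
then `f(z,x) = f(z,x₀)` for all `z ∈ 𝔻` and all `x ∈ [x₀,x₁]`. -/
lemma harmonic_min_principle {h1 h2 : ℂ → ℝ}
    (H1 : HarmonicOnSet h1 unitDisc) (H2 : HarmonicOnSet h2 unitDisc) (c : ℝ)
    (hge : ∀ z ∈ unitDisc, c ≤ h1 z - h2 z) {w : ℂ} (hw : w ∈ unitDisc)
    (hww : h1 w - h2 w = c) : ∀ z ∈ unitDisc, h1 z - h2 z = c := by
  set S : Set ℂ := {z | z ∈ unitDisc ∧ h1 z - h2 z = c} with hSdef
  set T : Set ℂ := {z | z ∈ unitDisc ∧ h1 z - h2 z ≠ c} with hTdef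
  have key : ∀ z ∈ unitDisc, ∃ r > 0, Metric.ball z r ⊆ unitDisc ∧
      ∃ g : ℂ → ℂ, DifferentiableOn ℂ g (Metric.ball z r) ∧
        ∀ x ∈ Metric.ball z r, h1 x - h2 x - c = (g x).re := by
    intro z hz
    obtain ⟨r1, hr1, hb1, g1, hg1, he1⟩ := H1 z hz
    obtain ⟨r2, hr2, hb2, g2, hg2, he2⟩ := H2 z hz
    have hsub1 : Metric.ball z (min r1 r2) ⊆ Metric.ball z r1 :=
      Metric.ball_subset_ball (min_le_left _ _)
    have hsub2 : Metric.ball z (min r1 r2) ⊆ Metric.ball z r2 :=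
      Metric.ball_subset_ball (min_le_right _ _)
    refine ⟨min r1 r2, lt_min hr1 hr2, hsub1.trans hb1,
      fun x => g1 x - g2 x - c, ((hg1.mono hsub1).sub (hg2.mono hsub2)).sub_const _, ?_⟩
    intro x hx
    rw [he1 x (hsub1 hx), he2 x (hsub2 hx)]
    simp [Complex.sub_re, Complex.ofReal_re]
  have hopenS : IsOpen S := by
    rw [Metric.isOpen_iff]
    rintro z ⟨hz𝔻, hzc⟩
    obtain ⟨r, hr, hB𝔻, g, hgd, hre⟩ := key z hz𝔻
    refine ⟨r, hr, ?_⟩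
    have hzB : z ∈ Metric.ball z r := Metric.mem_ball_self hr
    set φ : ℂ → ℂ := fun x => Complex.exp (-(g x)) with hφdef
    have hφd : DifferentiableOn ℂ φ (Metric.ball z r) := hgd.neg.cexp
    have hnφ : ∀ x ∈ Metric.ball z r, ‖φ x‖ = Real.exp (-(h1 x - h2 x - c)) := by
      intro x hx
      rw [hφdef]
      simp only [Complex.norm_exp, Complex.neg_re]
      rw [hre x hx]
    have hmax : IsMaxOn (norm ∘ φ) (Metric.ball z r) z := by
      rw [isMaxOn_iff]
      intro x hx
      simp only [Function.comp_apply]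
      rw [hnφ x hx, hnφ z hzB, hzc, sub_self, neg_zero, Real.exp_zero]
      have := hge x (hB𝔻 hx)
      have : -(h1 x - h2 x - c) ≤ 0 := by linarith
      calc Real.exp (-(h1 x - h2 x - c)) ≤ Real.exp 0 := Real.exp_le_exp.mpr this
        _ = 1 := Real.exp_zero
    have heqc := Complex.eqOn_of_isPreconnected_of_isMaxOn_norm
      (convex_ball z r).isPreconnected Metric.isOpen_ball hφd hzB hmax
    intro x hx
    have hx𝔻 := hB𝔻 hx
    have h2' : ‖φ x‖ = ‖φ z‖ := by rw [heqc hx]; rfl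
    rw [hnφ x hx, hnφ z hzB, hzc, sub_self, neg_zero, Real.exp_zero] at h2'
    have h0 : -(h1 x - h2 x - c) = 0 := Real.exp_injective (by rw [h2', Real.exp_zero])
    exact ⟨hx𝔻, by linarith⟩
  have hopenT : IsOpen T := by
    rw [Metric.isOpen_iff]
    rintro z ⟨hz𝔻, hzc⟩
    obtain ⟨r, hr, hB𝔻, g, hgd, hre⟩ := key z hz𝔻
    have hzB : z ∈ Metric.ball z r := Metric.mem_ball_self hr
    have hca : ContinuousAt (fun x => (g x).re) z :=
      (Complex.continuous_re.comp_continuousOn hgd.continuousOn).continuousAt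
        (Metric.isOpen_ball.mem_nhds hzB)
    have hne : (g z).re ≠ 0 := by
      rw [← hre z hzB]
      intro h; exact hzc (by linarith)
    have hev : ∀ᶠ x in nhds z, (g x).re ≠ 0 := hca.eventually_ne hne
    have hev2 : ∀ᶠ x in nhds z, x ∈ Metric.ball z r :=
      Metric.isOpen_ball.eventually_mem hzB
    obtain ⟨ε, hε, hball⟩ := Metric.eventually_nhds_iff_ball.mp (hev2.and hev)
    refine ⟨ε, hε, fun x hx => ?_⟩
    obtain ⟨hx1, hx2⟩ := hball x hx
    refine ⟨hB𝔻 hx1, fun hc => hx2 ?_⟩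
    rw [← hre x hx1, hc, sub_self]
  intro z hz𝔻
  by_contra hne
  have hpre : IsPreconnected unitDisc := by
    unfold unitDisc; exact (convex_ball _ _).isPreconnected
  obtain ⟨p, _, hpS, hpT⟩ := hpre S T hopenS hopenT
    (fun x hx => by by_cases h : h1 x - h2 x = c
                    exacts [Or.inl ⟨hx, h⟩, Or.inr ⟨hx, h⟩])
    ⟨w, hw, hw, hww⟩ ⟨z, hz𝔻, hz𝔻, hne⟩
  exact hpT.2 hpS.2

lemma unitInterval_monotone_of_continuous_injective (g : unitInterval → unitInterval)
    (hc : Continuous g) (hi : Function.Injective g) (h0 : g 0 = 0) : Monotone g := by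
  set F : ℝ → ℝ := fun t => (g (Set.projIcc 0 1 zero_le_one t) : ℝ) with hF
  have hFc : Continuous F := continuous_subtype_val.comp (hc.comp continuous_projIcc)
  have hF0 : F 0 = 0 := by
    rw [hF]
    simp only [Set.projIcc_left]
    rw [show (⟨0, le_refl 0, zero_le_one⟩ : Set.Icc (0:ℝ) 1) = (0 : unitInterval) from rfl, h0]
    rfl
  have hinj : Set.InjOn F (Set.Icc (0:ℝ) 1) := by
    intro s hs t ht h
    rw [hF] at h
    simp only at h
    rw [Set.projIcc_of_mem _ hs, Set.projIcc_of_mem _ ht] at h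
    have := hi (Subtype.coe_injective h)
    exact congrArg Subtype.val this
  have hmono := ContinuousOn.strictMonoOn_of_injOn_Icc (a := (0:ℝ)) (b := 1)
    zero_le_one (by rw [hF0]; exact (g (Set.projIcc 0 1 zero_le_one 1)).2.1)
    hFc.continuousOn hinj
  intro x y hxy
  rcases eq_or_lt_of_le hxy with h | h
  · rw [h]
  · have h1 := hmono x.2 y.2 (Subtype.coe_lt_coe.mpr h)
    rw [hF] at h1
    simp only at h1
    rw [Set.projIcc_val zero_le_one x, Set.projIcc_val zero_le_one y] at h1
    exact le_of_lt h1

theorem equal_values_propagate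
    {Γ : Type*} [Group Γ] (ρ : Γ → ℂ → ℂ) (hΓ : IsCocompactFuchsian Γ ρ)
    (σ : Γ → unitInterval → unitInterval) (hσ : IsActionByHomeomorphisms Γ unitInterval σ)
    (hfix0 : ∀ γ : Γ, σ γ 0 = 0) (hfix1 : ∀ γ : Γ, σ γ 1 = 1)
    (hnofinite : ∀ x : unitInterval, 0 < (x : ℝ) → (x : ℝ) < 1 →
      (Set.range fun γ : Γ => σ γ x).Infinite)
    (f : ℂ → unitInterval → ℝ)
    (hcont : ContinuousOn (fun p : ℂ × unitInterval => f p.1 p.2)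
      (unitDisc ×ˢ (univ : Set unitInterval)))
    (hharm : ∀ x : unitInterval, HarmonicOnSet (fun z => f z x) unitDisc)
    (hinv : ∀ γ : Γ, ∀ z ∈ unitDisc, ∀ x : unitInterval, f (ρ γ z) (σ γ x) = f z x)
    (hbd0 : ∀ z ∈ unitDisc, f z 0 = 0) (hbd1 : ∀ z ∈ unitDisc, f z 1 = 1)
    (z₀ : ℂ) (hz₀ : z₀ ∈ unitDisc) (x₀ x₁ : unitInterval) (hx : x₀ < x₁)
    (heq : f z₀ x₀ = f z₀ x₁) :
    ∀ z ∈ unitDisc, ∀ x : unitInterval, x₀ ≤ x → x ≤ x₁ → f z x = f z x₀ := by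
  haveI : Nonempty Γ := ⟨1⟩
  have h0𝔻 : (0:ℂ) ∈ unitDisc := by unfold unitDisc; simp
  have hDo : IsOpen unitDisc := by unfold unitDisc; exact Metric.isOpen_ball
  -- basic group action facts
  have hρinv : ∀ γ : Γ, ∀ z ∈ unitDisc, ρ γ (ρ γ⁻¹ z) = z := by
    intro γ z hz
    have h1 := hΓ.mul_act γ γ⁻¹ z hz
    rw [mul_inv_cancel, hΓ.one_act z hz] at h1
    exact h1.symm
  have hσinj : ∀ γ : Γ, Function.Injective (σ γ) := by
    intro γ x y h
    have := congrArg (σ γ⁻¹) h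
    rwa [← hσ.mul_act, ← hσ.mul_act, inv_mul_cancel, hσ.one_act, hσ.one_act] at this
  have hσmono : ∀ γ : Γ, Monotone (σ γ) := fun γ =>
    unitInterval_monotone_of_continuous_injective (σ γ) (hσ.continuous_act γ)
      (hσinj γ) (hfix0 γ)
  -- continuity pieces
  have hcAt : ∀ z ∈ unitDisc, ∀ x : unitInterval,
      ContinuousAt (fun p : ℂ × unitInterval => f p.1 p.2) (z, x) := by
    intro z hz x
    exact hcont.continuousAt ((hDo.prod isOpen_univ).mem_nhds (Set.mem_prod.mpr ⟨hz, trivial⟩))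
  have hfa : ∀ z ∈ unitDisc, Continuous fun x : unitInterval => f z x := by
    intro z hz
    rw [continuous_iff_continuousAt]
    intro x
    have h2 : ContinuousAt (fun x : unitInterval => ((z, x) : ℂ × unitInterval)) x :=
      (continuous_const.prodMk continuous_id).continuousAt
    exact (hcAt z hz x).comp h2
  -- invariance, inverse form
  have hinv' : ∀ γ : Γ, ∀ w ∈ unitDisc, ∀ x : unitInterval,
      f w (σ γ x) = f (ρ γ⁻¹ w) x := by
    intro γ w hw x
    have h1 := hinv γ (ρ γ⁻¹ w) (hΓ.maps_disc γ⁻¹ w hw) x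
    rwa [hρinv γ w hw] at h1
  -- orbit closures of interior points accumulate at 1 and at 0
  have hfixpt : ∀ y : unitInterval, 0 < (y:ℝ) → (y:ℝ) < 1 →
      ∀ s : unitInterval, (∀ γ : Γ, σ γ s = s) → (s:ℝ) ≠ 1 → (s:ℝ) ≠ 0 →
      y ≤ s ∨ s ≤ y → False := by
    intro y hy0 hy1 s hfixs hs1 hs0 _
    have hspos : 0 < (s:ℝ) := lt_of_le_of_ne s.2.1 (Ne.symm hs0)
    have hslt : (s:ℝ) < 1 := lt_of_le_of_ne s.2.2 hs1
    apply hnofinite s hspos hslt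
    have hset : (Set.range fun γ : Γ => σ γ s) = {s} :=
      Set.eq_singleton_iff_unique_mem.mpr
        ⟨⟨1, hσ.one_act s⟩, by rintro _ ⟨γ', rfl⟩; exact hfixs γ'⟩
    rw [hset]
    exact Set.finite_singleton s
  have horbfix : ∀ (y : unitInterval) (s : unitInterval),
      IsGreatest (closure (Set.range fun γ : Γ => σ γ y)) s ∨
      IsLeast (closure (Set.range fun γ : Γ => σ γ y)) s → (∀ γ : Γ, σ γ s = s) := by
    intro y s hs γ
    have hmapsC : ∀ γ' : Γ, ∀ t, t ∈ closure (Set.range fun γ'' : Γ => σ γ'' y) →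
        σ γ' t ∈ closure (Set.range fun γ'' : Γ => σ γ'' y) := by
      intro γ' t ht
      have h1 : σ γ' t ∈ σ γ' '' closure (Set.range fun γ'' : Γ => σ γ'' y) := ⟨t, ht, rfl⟩
      have h2 := image_closure_subset_closure_image (f := σ γ') (hσ.continuous_act γ') h1
      refine closure_mono ?_ h2
      rintro _ ⟨_, ⟨γ'', rfl⟩, rfl⟩
      exact ⟨γ' * γ'', hσ.mul_act γ' γ'' y⟩
    rcases hs with hG | hL
    · have h1 : σ γ s ≤ s := hG.2 (hmapsC γ s hG.1)
      have h2 : σ γ⁻¹ s ≤ s := hG.2 (hmapsC γ⁻¹ s hG.1)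
      have h3 : s ≤ σ γ s := by
        have := hσmono γ h2
        rwa [← hσ.mul_act, mul_inv_cancel, hσ.one_act] at this
      exact le_antisymm h1 h3
    · have h1 : s ≤ σ γ s := hL.2 (hmapsC γ s hL.1)
      have h2 : s ≤ σ γ⁻¹ s := hL.2 (hmapsC γ⁻¹ s hL.1)
      have h3 : σ γ s ≤ s := by
        have := hσmono γ h2
        rwa [← hσ.mul_act, mul_inv_cancel, hσ.one_act] at this
      exact le_antisymm h3 h1
  have horb1 : ∀ y : unitInterval, 0 < (y:ℝ) → (y:ℝ) < 1 →
      (1:unitInterval) ∈ closure (Set.range fun γ : Γ => σ γ y) := by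
    intro y hy0 hy1
    have hCne : (closure (Set.range fun γ : Γ => σ γ y)).Nonempty :=
      (Set.range_nonempty _).closure
    have hCc : IsCompact (closure (Set.range fun γ : Γ => σ γ y)) :=
      isClosed_closure.isCompact
    obtain ⟨s, hsG⟩ := hCc.exists_isGreatest hCne
    have hfixs := horbfix y s (Or.inl hsG)
    have hys : y ≤ s := hsG.2 (subset_closure ⟨1, hσ.one_act y⟩)
    have hs1 : s = 1 := by
      by_contra hne
      have hs1' : (s:ℝ) ≠ 1 := fun h => hne (Subtype.ext h)
      have hs0' : (s:ℝ) ≠ 0 := by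
        intro h
        have : (y:ℝ) ≤ 0 := h ▸ Subtype.coe_le_coe.mpr hys
        linarith
      exact absurd (Or.inl hys) (fun hor => hfixpt y hy0 hy1 s hfixs hs1' hs0' hor)
    exact hs1 ▸ hsG.1
  have horb0 : ∀ y : unitInterval, 0 < (y:ℝ) → (y:ℝ) < 1 →
      (0:unitInterval) ∈ closure (Set.range fun γ : Γ => σ γ y) := by
    intro y hy0 hy1
    have hCne : (closure (Set.range fun γ : Γ => σ γ y)).Nonempty :=
      (Set.range_nonempty _).closure
    have hCc : IsCompact (closure (Set.range fun γ : Γ => σ γ y)) :=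
      isClosed_closure.isCompact
    obtain ⟨s, hsL⟩ := hCc.exists_isLeast hCne
    have hfixs := horbfix y s (Or.inr hsL)
    have hys : s ≤ y := hsL.2 (subset_closure ⟨1, hσ.one_act y⟩)
    have hs0 : s = 0 := by
      by_contra hne
      have hs0' : (s:ℝ) ≠ 0 := fun h => hne (Subtype.ext h)
      have hs1' : (s:ℝ) ≠ 1 := by
        intro h
        have : (1:ℝ) ≤ (y:ℝ) := h ▸ Subtype.coe_le_coe.mpr hys
        linarith
      exact absurd (Or.inr hys) (fun hor => hfixpt y hy0 hy1 s hfixs hs1' hs0' hor)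
    exact hs0 ▸ hsL.1
  -- compact minimization of increments
  obtain ⟨K, hK𝔻, hKc, hKcov⟩ := hΓ.cocompact
  have hKne : K.Nonempty := by
    obtain ⟨γ, hγ⟩ := hKcov 0 h0𝔻
    exact ⟨_, hγ⟩
  set Δ : Set (unitInterval × unitInterval) := {p | p.1 ≤ p.2} with hΔdef
  have hΔc : IsCompact Δ := (isClosed_le continuous_fst continuous_snd).isCompact
  set F : ℂ × (unitInterval × unitInterval) → ℝ := fun q => f q.1 q.2.2 - f q.1 q.2.1 with hFdef
  have hFcont : ContinuousOn F (K ×ˢ Δ) := by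
    intro q hq
    have hq1 : q.1 ∈ unitDisc := hK𝔻 (Set.mem_prod.mp hq).1
    have c1 : ContinuousAt (fun q : ℂ × (unitInterval × unitInterval) => f q.1 q.2.2) q := by
      have h2 : ContinuousAt
          (fun q : ℂ × (unitInterval × unitInterval) => ((q.1, q.2.2) : ℂ × unitInterval)) q :=
        (continuous_fst.prodMk (continuous_snd.snd)).continuousAt
      exact ContinuousAt.comp (g := fun p : ℂ × unitInterval => f p.1 p.2)
        (f := fun q : ℂ × (unitInterval × unitInterval) => ((q.1, q.2.2) : ℂ × unitInterval))
        (hcAt q.1 hq1 q.2.2) h2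
    have c2 : ContinuousAt (fun q : ℂ × (unitInterval × unitInterval) => f q.1 q.2.1) q := by
      have h2 : ContinuousAt
          (fun q : ℂ × (unitInterval × unitInterval) => ((q.1, q.2.1) : ℂ × unitInterval)) q :=
        (continuous_fst.prodMk (continuous_snd.fst)).continuousAt
      exact ContinuousAt.comp (g := fun p : ℂ × unitInterval => f p.1 p.2)
        (f := fun q : ℂ × (unitInterval × unitInterval) => ((q.1, q.2.1) : ℂ × unitInterval))
        (hcAt q.1 hq1 q.2.1) h2
    exact (c1.sub c2).continuousWithinAt
  obtain ⟨q, hqmem, hqmin⟩ := (hKc.prod hΔc).exists_isMinOn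
    (hKne.prod ⟨(0, 0), le_refl (0 : unitInterval)⟩) hFcont
  set zs := q.1 with hzsdef
  set a := q.2.1 with hadef
  set b := q.2.2 with hbdef
  set m := f zs b - f zs a with hmdef
  have hzs𝔻 : zs ∈ unitDisc := hK𝔻 (Set.mem_prod.mp hqmem).1
  have hab : a ≤ b := (Set.mem_prod.mp hqmem).2
  -- lower bound for all increments
  have hm_lb : ∀ z ∈ unitDisc, ∀ x x' : unitInterval, x ≤ x' → m ≤ f z x' - f z x := by
    intro z hz x x' hxx'
    obtain ⟨γ, hγ⟩ := hKcov z hz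
    have h1 : f z x' = f (ρ γ z) (σ γ x') := (hinv γ z hz x').symm
    have h2 : f z x = f (ρ γ z) (σ γ x) := (hinv γ z hz x).symm
    rw [h1, h2]
    exact isMinOn_iff.mp hqmin (ρ γ z, (σ γ x, σ γ x'))
      (Set.mem_prod.mpr ⟨hγ, hσmono γ hxx'⟩)
  -- m is nonnegative
  have hm0 : 0 ≤ m := by
    by_contra hneg
    push_neg at hneg
    have hconst : ∀ z ∈ unitDisc, f z b - f z a = m :=
      harmonic_min_principle (hharm b) (hharm a) m
        (fun z hz => hm_lb z hz a b hab) hzs𝔻 rfl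
    have horbconst : ∀ γ : Γ, f 0 (σ γ b) - f 0 (σ γ a) = m := by
      intro γ
      rw [hinv' γ 0 h0𝔻 b, hinv' γ 0 h0𝔻 a]
      exact hconst _ (hΓ.maps_disc γ⁻¹ 0 h0𝔻)
    have hab_lt : a < b := by
      rcases eq_or_lt_of_le hab with h | h
      · exfalso; rw [hmdef, h] at hneg; simp at hneg
      · exact h
    have hfc : Continuous fun x : unitInterval => f 0 x := hfa 0 h0𝔻
    rcases eq_or_lt_of_le a.2.1 with ha0 | ha0
    · -- a = 0
      have ha0' : a = 0 := Subtype.ext ha0.symm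
      rcases eq_or_lt_of_le b.2.2 with hb1 | hb1
      · -- b = 1
        have hb1' : b = 1 := Subtype.ext hb1
        rw [hmdef, ha0', hb1', hbd1 zs hzs𝔻, hbd0 zs hzs𝔻] at hneg
        linarith
      · -- 0 < b < 1 : orbit of b accumulates at 0
        have hbpos : 0 < (b:ℝ) := by
          have h := Subtype.coe_lt_coe.mpr hab_lt
          linarith
        have hacc := horb0 b hbpos hb1
        have hc0 : ContinuousAt (fun x : unitInterval => f 0 x) 0 := hfc.continuousAt
        obtain ⟨δ, hδ, hδprop⟩ := Metric.continuousAt_iff.mp hc0 (-m) (by linarith)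
        obtain ⟨p, hpmem, hpd⟩ := Metric.mem_closure_iff.mp hacc δ hδ
        obtain ⟨γ, rfl⟩ := hpmem
        have hd1 : dist (σ γ b) (0:unitInterval) < δ := by rwa [dist_comm] at hpd
        have e1 := hδprop hd1
        have em := horbconst γ
        rw [ha0', hfix0 γ] at em
        rw [Real.dist_eq] at e1
        obtain ⟨e1a, e1b⟩ := abs_lt.mp e1
        linarith
    · -- 0 < a (and a < b ≤ 1 so a < 1) : orbit of a accumulates at 1
      have halt1 : (a:ℝ) < 1 := lt_of_lt_of_le (Subtype.coe_lt_coe.mpr hab_lt) b.2.2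
      have hacc := horb1 a ha0 halt1
      have hc1 : ContinuousAt (fun x : unitInterval => f 0 x) 1 := hfc.continuousAt
      obtain ⟨δ, hδ, hδprop⟩ := Metric.continuousAt_iff.mp hc1 (-m/2) (by linarith)
      obtain ⟨p, hpmem, hpd⟩ := Metric.mem_closure_iff.mp hacc δ hδ
      obtain ⟨γ, rfl⟩ := hpmem
      have hd1 : dist (σ γ a) (1:unitInterval) < δ := by rwa [dist_comm] at hpd
      have hle : (σ γ a : ℝ) ≤ (σ γ b : ℝ) := Subtype.coe_le_coe.mpr (hσmono γ hab)
      have hd2 : dist (σ γ b) (1:unitInterval) < δ := by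
        rw [Subtype.dist_eq, Real.dist_eq] at hd1 ⊢
        have hb1 : (σ γ b : ℝ) ≤ 1 := (σ γ b).2.2
        have hco : ((1:unitInterval):ℝ) = 1 := rfl
        obtain ⟨h1a, h1b⟩ := abs_lt.mp hd1
        rw [abs_lt]
        constructor <;> [linarith; linarith]
      have e1 := hδprop hd1
      have e2 := hδprop hd2
      have em := horbconst γ
      rw [Real.dist_eq] at e1 e2
      obtain ⟨e1a, e1b⟩ := abs_lt.mp e1
      obtain ⟨e2a, e2b⟩ := abs_lt.mp e2
      linarith
  -- monotonicity
  have mono : ∀ z ∈ unitDisc, ∀ x x' : unitInterval, x ≤ x' → f z x ≤ f z x' := by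
    intro z hz x x' h
    have := hm_lb z hz x x' h
    linarith
  -- final step
  have hdiff : ∀ z ∈ unitDisc, f z x₁ - f z x₀ = 0 :=
    harmonic_min_principle (hharm x₁) (hharm x₀) 0
      (fun z hz => by have := mono z hz x₀ x₁ hx.le; linarith) hz₀ (by linarith)
  intro z hz x hx0 hx1
  have l1 := mono z hz x₀ x hx0
  have l2 := mono z hz x x₁ hx1
  have := hdiff z hz
  linarith
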